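/- [Monotonicity of the U-update] Let U ∈ 𝒫 and Q ∈ 𝕆, and set Z := ΦQQᵀΦᵀ. If U' ∈ 𝒫 satisfies ⟨ZU, V⟩ ≤ ⟨ZU, U'⟩ for all V ∈ 𝒫, then ⟨U'ᵀΦQ, U'ᵀΦQ⟩ ≥ ⟨UᵀΦQ, UᵀΦQ⟩; that is, the objective value cannot decrease through the U-update: f(U',Q) ≥ f(U,Q). -/
import Mathlib


open Matrix BigOperators Filter

noncomputable section

/-- Frobenius inner product of two real matrices of the same size. -/
def frob {α β : Type*} [Fintype α] [Fintype β] (A B : Matrix α β ℝ) : ℝ :=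
  ∑ u, ∑ v, A u v * B u v

/-- The set 𝒫: blockwise partial permutation matrices. Rows indexed by pairs (i,r),
1 ≤ i ≤ k, 1 ≤ r ≤ m i; columns by Fin d. Entries in {0,1}, exactly one 1 per row,
each block column sum at most 1. -/
def isP {k : ℕ} (d : ℕ) (m : Fin k → ℕ)
    (U : Matrix (Σ i : Fin k, Fin (m i)) (Fin d) ℝ) : Prop :=
  (∀ u v, U u v = 0 ∨ U u v = 1) ∧
  (∀ u, ∃! v, U u v = 1) ∧
  (∀ (i : Fin k) (c : Fin d), ∑ r : Fin (m i), U ⟨i, r⟩ c ≤ 1)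

/-- The set 𝕆: block-orthogonal matrices; each b×b block is orthogonal. -/
def isO (k b : ℕ) (Q : Matrix (Fin k × Fin b) (Fin b) ℝ) : Prop :=
  ∀ i : Fin k,
    (Matrix.of fun s t => Q (i, s) t) * (Matrix.of fun s t => Q (i, s) t)ᵀ =
      (1 : Matrix (Fin b) (Fin b) ℝ)

/-- Φ is block-diagonal: entries with mismatched block indices vanish. -/
def isBlockDiag {k : ℕ} (m : Fin k → ℕ) (b : ℕ)
    (Φ : Matrix (Σ i : Fin k, Fin (m i)) (Fin k × Fin b) ℝ) : Prop :=
  ∀ (i : Fin k) (r : Fin (m i)) (j : Fin k) (s : Fin b), i ≠ j → Φ ⟨i, r⟩ (j, s) = 0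

/-- The objective f(U,Q) = ⟨UᵀΦQ, UᵀΦQ⟩. -/
def obj {k b d : ℕ} (m : Fin k → ℕ)
    (Φ : Matrix (Σ i : Fin k, Fin (m i)) (Fin k × Fin b) ℝ)
    (U : Matrix (Σ i : Fin k, Fin (m i)) (Fin d) ℝ)
    (Q : Matrix (Fin k × Fin b) (Fin b) ℝ) : ℝ :=
  frob (Uᵀ * Φ * Q) (Uᵀ * Φ * Q)


section Aux

variable {α β γ : Type*} [Fintype α] [Fintype β] [Fintype γ]

lemma frob_eq_trace (A B : Matrix α β ℝ) : frob A B = (Aᵀ * B).trace := by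
  rw [frob, Finset.sum_comm]
  simp [Matrix.trace, Matrix.mul_apply, Matrix.diag]

lemma frob_nonneg (A : Matrix α β ℝ) : 0 ≤ frob A A := by
  apply Finset.sum_nonneg; intro u _
  exact Finset.sum_nonneg fun v _ => mul_self_nonneg _

lemma frob_comm (A B : Matrix α β ℝ) : frob A B = frob B A := by
  simp [frob, mul_comm]

lemma frob_sub_sub (A B : Matrix α β ℝ) :
    frob (A - B) (A - B) = frob A A - 2 * frob A B + frob B B := by
  simp only [frob, Matrix.sub_apply]
  rw [show (2:ℝ) * (∑ u, ∑ v, A u v * B u v) =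
      ∑ u, ∑ v, 2 * (A u v * B u v) by rw [Finset.mul_sum]; congr 1; ext u; rw [Finset.mul_sum]]
  rw [← Finset.sum_sub_distrib, ← Finset.sum_add_distrib]
  congr 1; ext u
  rw [← Finset.sum_sub_distrib, ← Finset.sum_add_distrib]
  congr 1; ext v; ring

lemma frob_key (A : Matrix α β ℝ) (U V : Matrix α γ ℝ) :
    frob (A * Aᵀ * U) V = frob (Uᵀ * A) (Vᵀ * A) := by
  rw [frob_eq_trace, frob_eq_trace]
  have h1 : (A * Aᵀ * U)ᵀ * V = Uᵀ * (A * Aᵀ) * V := by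
    rw [Matrix.transpose_mul, Matrix.transpose_mul, Matrix.transpose_transpose]
  have h2 : (Uᵀ * A)ᵀ * (Vᵀ * A) = (Aᵀ * U) * (Vᵀ * A) := by
    rw [Matrix.transpose_mul, Matrix.transpose_transpose]
  rw [h1, h2, Matrix.trace_mul_comm (Aᵀ * U) (Vᵀ * A)]
  have h3 : Vᵀ * A * (Aᵀ * U) = Vᵀ * (A * Aᵀ) * U := by
    rw [Matrix.mul_assoc, Matrix.mul_assoc, Matrix.mul_assoc]
  rw [h3, ← Matrix.trace_transpose (Vᵀ * (A * Aᵀ) * U)]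
  congr 1
  rw [Matrix.transpose_mul, Matrix.transpose_mul, Matrix.transpose_transpose,
    Matrix.transpose_mul, Matrix.transpose_transpose]
  simp [Matrix.mul_assoc]

end Aux

theorem monotonicity_U_update (k b d : ℕ) (hk : 0 < k) (hb : 0 < b) (hd : 0 < d)
    (m : Fin k → ℕ) (hm : ∀ i, 0 < m i)
    (Φ : Matrix (Σ i : Fin k, Fin (m i)) (Fin k × Fin b) ℝ) (hΦ : isBlockDiag m b Φ)
    (U U' : Matrix (Σ i : Fin k, Fin (m i)) (Fin d) ℝ)
    (Q : Matrix (Fin k × Fin b) (Fin b) ℝ)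
    (hU : isP d m U) (hQ : isO k b Q) (hU' : isP d m U')
    (hproj : ∀ V, isP d m V →
      frob (Φ * Q * Qᵀ * Φᵀ * U) V ≤ frob (Φ * Q * Qᵀ * Φᵀ * U) U') :
    obj m Φ U' Q ≥ obj m Φ U Q := by
  have hZ : Φ * Q * Qᵀ * Φᵀ * U = (Φ * Q) * (Φ * Q)ᵀ * U := by
    rw [Matrix.transpose_mul, Matrix.mul_assoc (Φ * Q) Qᵀ Φᵀ]
  set A := Φ * Q with hA
  have hOU : obj m Φ U Q = frob (Uᵀ * A) (Uᵀ * A) := by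
    rw [obj, Matrix.mul_assoc, hA]
  have hOU' : obj m Φ U' Q = frob (U'ᵀ * A) (U'ᵀ * A) := by
    rw [obj, Matrix.mul_assoc, hA]
  have hp := hproj U hU
  rw [hZ, frob_key, frob_key] at hp
  -- hp : frob (Uᵀ*A) (Uᵀ*A) ≤ frob (Uᵀ*A) (U'ᵀ*A)
  set x := Uᵀ * A
  set y := U'ᵀ * A
  have hnn := frob_nonneg (y - x)
  rw [frob_sub_sub] at hnn
  rw [hOU, hOU']
  have hcomm : frob x y = frob y x := frob_comm x y
  nlinarith [hp, hnn, hcomm]
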